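/- Through every point (x,y) with x ≠ 0 and y ≠ 0 there pass exactly two conics of the confocal family x²/(a²−λ) + y²/(b²−λ) = 1 (a² > b² > 0): the equation x²/(a²−λ) + y²/(b²−λ) = 1 has exactly one solution λ with λ < b² and exactly one solution with b² < λ < a². -/
import Mathlib


/-- Through every point `(x,y)` off the axes there pass exactly two conics of
the confocal family `x²/(a²−λ) + y²/(b²−λ) = 1` (with `a² > b² > 0`): there is
exactly one solution `λ < b²` (an ellipse) and exactly one solution
`b² < λ < a²` (a hyperbola). -/
theorem confocal_two_conics (a b x y : ℝ) (hb : 0 < b ^ 2) (hab : b ^ 2 < a ^ 2)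
    (hx : x ≠ 0) (hy : y ≠ 0) :
    (∃! l : ℝ, l < b ^ 2 ∧ x ^ 2 / (a ^ 2 - l) + y ^ 2 / (b ^ 2 - l) = 1) ∧
    (∃! l : ℝ, b ^ 2 < l ∧ l < a ^ 2 ∧
      x ^ 2 / (a ^ 2 - l) + y ^ 2 / (b ^ 2 - l) = 1) := by
  have hx2 : 0 < x ^ 2 := by positivity
  have hy2 : 0 < y ^ 2 := by positivity
  have hD : 0 < (a ^ 2 + b ^ 2 - x ^ 2 - y ^ 2) ^ 2 -
      4 * (a ^ 2 * b ^ 2 - x ^ 2 * b ^ 2 - y ^ 2 * a ^ 2) := by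
    nlinarith [mul_pos hy2 (sub_pos.mpr hab),
      sq_nonneg (2 * b ^ 2 - (a ^ 2 + b ^ 2 - x ^ 2 - y ^ 2))]
  obtain ⟨s, hs0, hs2⟩ : ∃ s : ℝ, 0 < s ∧ s ^ 2 = (a ^ 2 + b ^ 2 - x ^ 2 - y ^ 2) ^ 2 -
      4 * (a ^ 2 * b ^ 2 - x ^ 2 * b ^ 2 - y ^ 2 * a ^ 2) :=
    ⟨Real.sqrt _, Real.sqrt_pos.mpr hD, Real.sq_sqrt hD.le⟩
  -- q(b²) < 0 :  (2b²-B)² < s²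
  have hDb : (2 * b ^ 2 - (a ^ 2 + b ^ 2 - x ^ 2 - y ^ 2)) ^ 2 < s ^ 2 := by
    nlinarith [mul_pos hy2 (sub_pos.mpr hab)]
  -- q(a²) > 0 :  s² < (2a²-B)²
  have hDa : s ^ 2 < (2 * a ^ 2 - (a ^ 2 + b ^ 2 - x ^ 2 - y ^ 2)) ^ 2 := by
    nlinarith [mul_pos hx2 (sub_pos.mpr hab)]
  have hrm : (a ^ 2 + b ^ 2 - x ^ 2 - y ^ 2 - s) / 2 < b ^ 2 := by nlinarith [hDb, hs0]
  have hrp1 : b ^ 2 < (a ^ 2 + b ^ 2 - x ^ 2 - y ^ 2 + s) / 2 := by nlinarith [hDb, hs0]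
  have hrp2 : (a ^ 2 + b ^ 2 - x ^ 2 - y ^ 2 + s) / 2 < a ^ 2 := by nlinarith [hDa, hs0]
  have key : ∀ l : ℝ, (a ^ 2 - l ≠ 0) → (b ^ 2 - l ≠ 0) →
      (x ^ 2 / (a ^ 2 - l) + y ^ 2 / (b ^ 2 - l) = 1 ↔
        l ^ 2 - (a ^ 2 + b ^ 2 - x ^ 2 - y ^ 2) * l +
          (a ^ 2 * b ^ 2 - x ^ 2 * b ^ 2 - y ^ 2 * a ^ 2) = 0) := by
    intro l h1 h2
    rw [div_add_div _ _ h1 h2, div_eq_one_iff_eq (mul_ne_zero h1 h2)]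
    constructor <;> intro h <;> linear_combination -h
  constructor
  · refine ⟨(a ^ 2 + b ^ 2 - x ^ 2 - y ^ 2 - s) / 2, ⟨hrm, ?_⟩, ?_⟩
    · rw [key _ (ne_of_gt (by linarith)) (ne_of_gt (by linarith))]
      linear_combination hs2 / 4
    · rintro l ⟨hl, he⟩
      have hq := (key l (ne_of_gt (by linarith)) (ne_of_gt (by linarith))).mp he
      have hfac : (2 * l - (a ^ 2 + b ^ 2 - x ^ 2 - y ^ 2) - s) *
          (2 * l - (a ^ 2 + b ^ 2 - x ^ 2 - y ^ 2) + s) = 0 := by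
        linear_combination 4 * hq - hs2
      rcases mul_eq_zero.mp hfac with h | h
      · linarith
      · linarith
  · refine ⟨(a ^ 2 + b ^ 2 - x ^ 2 - y ^ 2 + s) / 2, ⟨hrp1, hrp2, ?_⟩, ?_⟩
    · rw [key _ (ne_of_gt (by linarith)) (ne_of_lt (by linarith))]
      linear_combination hs2 / 4
    · rintro l ⟨hl1, hl2, he⟩
      have hq := (key l (ne_of_gt (by linarith)) (ne_of_lt (by linarith))).mp he
      have hfac : (2 * l - (a ^ 2 + b ^ 2 - x ^ 2 - y ^ 2) - s) *
          (2 * l - (a ^ 2 + b ^ 2 - x ^ 2 - y ^ 2) + s) = 0 := by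
        linear_combination 4 * hq - hs2
      rcases mul_eq_zero.mp hfac with h | h
      · linarith
      · linarith
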